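/- For every m ∈ ℕ there exists n₀ such that for all n ≥ n₀ there is no averaging set of order 3 and size k ≤ m of B_{n,2} = [0, 1 - n^{-2}] ∪ [n, n + n^{-2}] ⊂ ℝ even allowing points anywhere in ℝ. Quantitatively: if x₁,...,x_k ∈ ℝ satisfy (1/k)Σ x_j^q = ∫_{B_{n,2}} x^q dx for q = 0,1,2,3 (note λ(B_{n,2}) = 1), then k ≥ (3/7)·n^{2/3}. -/

import Mathlib

open MeasureTheory Set

noncomputable def Bset2 (n : ℕ) : Set ℝ :=
  Set.Icc 0 (1 - 1 / (n : ℝ) ^ 2) ∪ Set.Icc (n : ℝ) ((n : ℝ) + 1 / (n : ℝ) ^ 2)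

lemma integral_Bset2 (n : ℕ) (hn : 1 ≤ n) (q : ℕ) :
    ∫ t in Bset2 n, t ^ q =
      ((1 - 1 / (n : ℝ) ^ 2) ^ (q + 1)) / (q + 1) +
      (((n : ℝ) + 1 / (n : ℝ) ^ 2) ^ (q + 1) - (n : ℝ) ^ (q + 1)) / (q + 1) := by
  have hnR : (1 : ℝ) ≤ (n : ℝ) := by exact_mod_cast hn
  have hnpos : (0:ℝ) < (n:ℝ) := by linarith
  have hb : 1 - 1 / (n : ℝ) ^ 2 < (n : ℝ) := by
    have : (0:ℝ) < 1 / (n:ℝ)^2 := by positivity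
    linarith
  have hd : Disjoint (Set.Icc (0:ℝ) (1 - 1 / (n : ℝ) ^ 2))
      (Set.Icc (n : ℝ) ((n : ℝ) + 1 / (n : ℝ) ^ 2)) := by
    apply Set.disjoint_left.2
    rintro x ⟨_, hx2⟩ ⟨hx3, _⟩
    linarith
  have h0 : (0:ℝ) ≤ 1 - 1 / (n : ℝ) ^ 2 := by
    have h1 : 1 / (n:ℝ)^2 ≤ 1 := by
      apply div_le_one_of_le₀ <;> nlinarith
    linarith
  have hio : (n:ℝ) ≤ (n : ℝ) + 1 / (n : ℝ) ^ 2 := by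
    have : (0:ℝ) ≤ 1 / (n:ℝ)^2 := by positivity
    linarith
  rw [Bset2, setIntegral_union hd measurableSet_Icc
    ((continuous_pow q).integrableOn_Icc) ((continuous_pow q).integrableOn_Icc),
    integral_Icc_eq_integral_Ioc, integral_Icc_eq_integral_Ioc,
    ← intervalIntegral.integral_of_le h0, ← intervalIntegral.integral_of_le hio,
    integral_pow, integral_pow]
  norm_num

lemma key (n : ℕ) (hn : 1 ≤ n) (k : ℕ) (x : Fin k → ℝ) (hk : 0 < k)
    (hx : ∀ q : ℕ, q ≤ 3 → (k : ℝ)⁻¹ * ∑ j, x j ^ q = ∫ t in Bset2 n, t ^ q) :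
    (3 / 7 : ℝ) * (n : ℝ) ^ ((2 : ℝ) / 3) ≤ k := by
  haveI : Nonempty (Fin k) := Fin.pos_iff_nonempty.mp hk
  have ha : (1:ℝ) ≤ (n:ℝ) := by exact_mod_cast hn
  have ha0 : (0:ℝ) < (n:ℝ) := by linarith
  have hkR : (0:ℝ) < (k:ℝ) := by exact_mod_cast hk
  set a := (n:ℝ) with ha_def
  have h2 := hx 2 (by norm_num)
  have h3 := hx 3 (by norm_num)
  rw [integral_Bset2 n hn, inv_mul_eq_div, div_eq_iff hkR.ne'] at h2 h3
  norm_num at h2 h3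
  rw [← ha_def] at h2 h3
  simp only [← one_div] at h2 h3
  have ha2 : (0:ℝ) < a^2 := by positivity
  have hM2 : (1 - 1/a^2)^3/3 + ((a + 1/a^2)^3 - a^3)/3 ≤ 7/3 := by
    rw [← add_div, div_le_div_iff₀ (by norm_num) (by norm_num)]
    field_simp
    nlinarith [sq_nonneg (a^2-1), sq_nonneg a, sq_nonneg (a^3-1), pow_pos ha0 3,
      pow_pos ha0 6, one_le_pow₀ ha (n := 6), one_le_pow₀ ha (n := 3)]
  have hM3 : a ≤ (1 - 1/a^2)^4/4 + ((a + 1/a^2)^4 - a^4)/4 := by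
    have h1 : (0:ℝ) ≤ (1 - 1/a^2)^4 := by positivity
    have h2' : 4 * a ≤ (a + 1/a^2)^4 - a^4 := by
      have hε : 1/a^2 * a^2 = 1 := by field_simp
      nlinarith [pow_pos ha0 2, sq_nonneg (1/a^2), pow_pos (show (0:ℝ) < 1/a^2 by positivity) 3,
        mul_pos ha0 (show (0:ℝ) < 1/a^2 by positivity)]
    linarith
  have hsum3 : (k:ℝ) * a ≤ ∑ j, x j ^ 3 := by
    rw [h3, mul_comm]
    exact mul_le_mul_of_nonneg_right hM3 hkR.le
  obtain ⟨j, -, hj⟩ : ∃ j ∈ Finset.univ, a ≤ x j ^ 3 := by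
    apply Finset.exists_le_of_sum_le (Finset.univ_nonempty (α := Fin k))
    simpa using hsum3
  have hxj : 0 < x j := by
    by_contra h
    push_neg at h
    have := Odd.pow_nonpos (by decide : Odd 3) h
    linarith
  have hpow : a ^ ((2:ℝ)/3) ≤ x j ^ 2 := by
    have h1 : a ^ ((2:ℝ)/3) ≤ (x j ^ 3) ^ ((2:ℝ)/3) :=
      Real.rpow_le_rpow (by linarith) hj (by norm_num)
    have h2' : (x j ^ 3) ^ ((2:ℝ)/3) = x j ^ 2 := by
      rw [← Real.rpow_natCast (x j) 3, ← Real.rpow_mul hxj.le]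
      norm_num
    linarith
  have hsum2 : x j ^ 2 ≤ ∑ i, x i ^ 2 :=
    Finset.single_le_sum (fun i _ => sq_nonneg (x i)) (Finset.mem_univ j)
  have hfin : a ^ ((2:ℝ)/3) ≤ (k:ℝ) * (7/3) :=
    calc a ^ ((2:ℝ)/3) ≤ ∑ i, x i ^ 2 := le_trans hpow hsum2
    _ = ((1 - 1/a^2)^3/3 + ((a + 1/a^2)^3 - a^3)/3) * k := h2
    _ ≤ (7/3) * k := mul_le_mul_of_nonneg_right hM2 hkR.le
    _ = (k:ℝ) * (7/3) := mul_comm _ _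
  linarith

theorem stmt15 :
    (∀ m : ℕ, ∃ n₀ : ℕ, ∀ n : ℕ, n₀ ≤ n →
      ¬ ∃ (k : ℕ) (x : Fin k → ℝ), 0 < k ∧ k ≤ m ∧
        (∀ q : ℕ, q ≤ 3 →
          (k : ℝ)⁻¹ * ∑ j, x j ^ q = ∫ t in Bset2 n, t ^ q)) ∧
    (∀ n : ℕ, 1 ≤ n → ∀ (k : ℕ) (x : Fin k → ℝ), 0 < k →
      (∀ q : ℕ, q ≤ 3 → (k : ℝ)⁻¹ * ∑ j, x j ^ q = ∫ t in Bset2 n, t ^ q) →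
      (3 / 7 : ℝ) * (n : ℝ) ^ ((2 : ℝ) / 3) ≤ k) := by
  constructor
  · intro m
    refine ⟨(7 * (m + 1)) ^ 3, fun n hn => ?_⟩
    rintro ⟨k, x, hk, hkm, hx⟩
    have hpos : 0 < (7 * (m + 1)) ^ 3 := by positivity
    have hn1 : 1 ≤ n := le_trans hpos hn
    have hkey := key n hn1 k x hk hx
    have hn' : ((7 * ((m:ℝ) + 1)) ^ 3 : ℝ) ≤ (n : ℝ) := by
      have : ((7 * (m + 1)) ^ 3 : ℕ) ≤ (n : ℝ) := Nat.cast_le.mpr hn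
      push_cast at this
      linarith
    have hmono : ((7 * ((m:ℝ) + 1)) ^ 3) ^ ((2:ℝ)/3) ≤ (n : ℝ) ^ ((2:ℝ)/3) :=
      Real.rpow_le_rpow (by positivity) hn' (by norm_num)
    have heq : ((7 * ((m:ℝ) + 1)) ^ 3) ^ ((2:ℝ)/3) = (7 * ((m:ℝ) + 1)) ^ 2 := by
      rw [← Real.rpow_natCast (7 * ((m:ℝ) + 1)) 3, ← Real.rpow_mul (by positivity)]
      norm_num
    have hkmR : (k : ℝ) ≤ (m : ℝ) := Nat.cast_le.mpr hkm
    rw [heq] at hmono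
    nlinarith [sq_nonneg ((m:ℝ) + 1), sq_nonneg (m:ℝ)]
  · exact fun n hn k x hk hx => key n hn k x hk hx
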